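/- For n ≥ 2: (i) if (F,G) is a cross-Sperner pair of families of subsets of [n] with |F| = 2^(n−2), then |G| ≤ 2^(n−2); (ii) there exists a cross-Sperner pair (F,G) of families of subsets of [n] with |F| = 2^(n−2) and |G| = 2^(n−2). In other words, F(n, 2^(n−2)) = 2^(n−2). -/

import Mathlib

open Finset

lemma cs_arith (m g u d i Z : ℤ) (hm0 : 0 ≤ m) (hg0 : 0 ≤ g) (hu0 : 0 ≤ u)
    (hd0 : 0 ≤ d) (hi0 : 0 ≤ i) (hZ0 : 0 < Z)
    (h1 : g + u + d ≤ Z + i) (h2 : Z * i ≤ u * d) (h3 : m ≤ i)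
    (h4 : u ≤ Z) (h5 : d ≤ Z) : 16 * (m * g) ≤ Z * Z := by
  have key1 : Z * g ≤ (Z - u) * (Z - d) := by nlinarith
  have key2 : Z * m ≤ u * d := by nlinarith
  have prod : (Z * m) * (Z * g) ≤ (u * d) * ((Z - u) * (Z - d)) :=
    mul_le_mul key2 key1 (by positivity) (by nlinarith)
  have final : 16 * ((u * d) * ((Z - u) * (Z - d))) ≤ Z ^ 4 := by
    nlinarith [sq_nonneg (Z - 2*u), sq_nonneg (Z - 2*d), mul_le_mul
      (show 4 * (u * (Z - u)) ≤ Z ^ 2 by nlinarith [sq_nonneg (Z - 2*u)])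
      (show 4 * (d * (Z - d)) ≤ Z ^ 2 by nlinarith [sq_nonneg (Z - 2*d)])
      (by nlinarith) (by positivity)]
  nlinarith [sq_nonneg Z, mul_pos hZ0 hZ0]

lemma cs_product_bound {α : Type*} [Fintype α] [DecidableEq α]
    (𝓕 𝓖 : Finset (Finset α))
    (h : ∀ F ∈ 𝓕, ∀ G ∈ 𝓖, ¬ F ⊆ G ∧ ¬ G ⊆ F) :
    16 * (𝓕.card * 𝓖.card) ≤ 2 ^ Fintype.card α * 2 ^ Fintype.card α := by
  classical
  let N := 2 ^ Fintype.card α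
  let 𝓤 : Finset (Finset α) := univ.filter (fun S => ∃ F ∈ 𝓕, F ⊆ S)
  let 𝓓 : Finset (Finset α) := univ.filter (fun S => ∃ F ∈ 𝓕, S ⊆ F)
  have hUup : IsUpperSet (𝓤 : Set (Finset α)) := by
    intro S T hST hS
    simp only [𝓤, coe_filter, Set.mem_setOf_eq, mem_univ, true_and] at hS ⊢
    obtain ⟨F, hF, hFS⟩ := hS
    exact ⟨F, hF, hFS.trans hST⟩
  have hDlow : IsLowerSet (𝓓 : Set (Finset α)) := by
    intro S T hTS hS
    simp only [𝓓, coe_filter, Set.mem_setOf_eq, mem_univ, true_and] at hS ⊢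
    obtain ⟨F, hF, hSF⟩ := hS
    exact ⟨F, hF, hTS.trans hSF⟩
  have hHK : N * (𝓤 ∩ 𝓓).card ≤ 𝓤.card * 𝓓.card := hUup.card_inter_le_finset hDlow
  have hFsub : 𝓕 ⊆ 𝓤 ∩ 𝓓 := by
    intro F hF
    simp only [𝓤, 𝓓, mem_inter, mem_filter, mem_univ, true_and]
    exact ⟨⟨F, hF, subset_rfl⟩, ⟨F, hF, subset_rfl⟩⟩
  have hdisj : Disjoint 𝓖 (𝓤 ∪ 𝓓) := by
    rw [disjoint_left]
    intro G hG hGU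
    rcases mem_union.1 hGU with hU | hD
    · simp only [𝓤, mem_filter, mem_univ, true_and] at hU
      obtain ⟨F, hF, hFG⟩ := hU
      exact (h F hF G hG).1 hFG
    · simp only [𝓓, mem_filter, mem_univ, true_and] at hD
      obtain ⟨F, hF, hGF⟩ := hD
      exact (h F hF G hG).2 hGF
  have huniv : (univ : Finset (Finset α)).card = N := by
    rw [Finset.card_univ, Fintype.card_finset]
  have hcardle : 𝓖.card + (𝓤 ∪ 𝓓).card ≤ N := by
    rw [← card_union_of_disjoint hdisj, ← huniv]
    exact card_le_univ _
  have hunion : (𝓤 ∪ 𝓓).card + (𝓤 ∩ 𝓓).card = 𝓤.card + 𝓓.card :=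
    card_union_add_card_inter 𝓤 𝓓
  have hUN : 𝓤.card ≤ N := huniv ▸ card_le_univ _
  have hDN : 𝓓.card ≤ N := huniv ▸ card_le_univ _
  have hFi : 𝓕.card ≤ (𝓤 ∩ 𝓓).card := card_le_card hFsub
  have h1 : 𝓖.card + 𝓤.card + 𝓓.card ≤ N + (𝓤 ∩ 𝓓).card := by omega
  have hN0 : 0 < N := Nat.pow_pos (by norm_num)
  have := cs_arith (𝓕.card : ℤ) (𝓖.card : ℤ) (𝓤.card : ℤ) (𝓓.card : ℤ)
    ((𝓤 ∩ 𝓓).card : ℤ) (N : ℤ)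
    (Int.natCast_nonneg _) (Int.natCast_nonneg _) (Int.natCast_nonneg _)
    (Int.natCast_nonneg _) (Int.natCast_nonneg _) (by exact_mod_cast hN0)
    (by exact_mod_cast h1) (by exact_mod_cast hHK) (by exact_mod_cast hFi)
    (by exact_mod_cast hUN) (by exact_mod_cast hDN)
  exact_mod_cast this

/-- A pair of families `(𝓕, 𝓖)` is cross-Sperner if there is no pair
`F ∈ 𝓕`, `G ∈ 𝓖` with `F ⊆ G` or `G ⊆ F`. -/
def CrossSperner (𝓕 𝓖 : Finset (Finset ℕ)) : Prop :=
  ∀ F ∈ 𝓕, ∀ G ∈ 𝓖, ¬ F ⊆ G ∧ ¬ G ⊆ F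

theorem cross_sperner_F_n_2_pow (n : ℕ) (hn : 2 ≤ n) :
    (∀ 𝓕 𝓖 : Finset (Finset ℕ),
      𝓕 ⊆ (Finset.Icc 1 n).powerset → 𝓖 ⊆ (Finset.Icc 1 n).powerset →
      CrossSperner 𝓕 𝓖 → 𝓕.card = 2 ^ (n - 2) → 𝓖.card ≤ 2 ^ (n - 2)) ∧
    (∃ 𝓕 𝓖 : Finset (Finset ℕ),
      𝓕 ⊆ (Finset.Icc 1 n).powerset ∧ 𝓖 ⊆ (Finset.Icc 1 n).powerset ∧
      CrossSperner 𝓕 𝓖 ∧ 𝓕.card = 2 ^ (n - 2) ∧ 𝓖.card = 2 ^ (n - 2)) := by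
  constructor
  · -- upper bound
    intro 𝓕 𝓖 hF hG hcs hcard
    classical
    -- transfer to Fin n
    let f : Finset ℕ → Finset (Fin n) := fun S => univ.filter (fun k => (k : ℕ) + 1 ∈ S)
    have hmono : ∀ S T : Finset ℕ, S ⊆ Finset.Icc 1 n → (f S ⊆ f T → S ⊆ T) := by
      intro S T hS hfST x hx
      have hxI : x ∈ Finset.Icc 1 n := hS hx
      rw [mem_Icc] at hxI
      have hxlt : x - 1 < n := by omega
      have : (⟨x - 1, hxlt⟩ : Fin n) ∈ f S := by
        simp only [f, mem_filter, mem_univ, true_and]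
        have : x - 1 + 1 = x := by omega
        rw [this]; exact hx
      have := hfST this
      simp only [f, mem_filter, mem_univ, true_and] at this
      have hx1 : x - 1 + 1 = x := by omega
      rwa [hx1] at this
    have hinj : Set.InjOn f (𝓕 : Set (Finset ℕ)) := by
      intro S hS T hT hST
      exact Subset.antisymm
        (hmono S T ((mem_powerset.1 (hF hS))) (hST ▸ subset_rfl))
        (hmono T S ((mem_powerset.1 (hF hT))) (hST ▸ subset_rfl))
    let 𝓕' := 𝓕.image f
    let 𝓖' := 𝓖.image f
    have hcard' : 𝓕'.card = 𝓕.card := card_image_of_injOn hinj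
    have hcs' : ∀ F ∈ 𝓕', ∀ G ∈ 𝓖', ¬ F ⊆ G ∧ ¬ G ⊆ F := by
      intro F' hF' G' hG'
      obtain ⟨F, hFm, rfl⟩ := mem_image.1 hF'
      obtain ⟨G, hGm, rfl⟩ := mem_image.1 hG'
      constructor
      · intro hsub
        exact (hcs F hFm G hGm).1 (hmono F G (mem_powerset.1 (hF hFm)) hsub)
      · intro hsub
        exact (hcs F hFm G hGm).2 (hmono G F (mem_powerset.1 (hG hGm)) hsub)
    have hbound := cs_product_bound 𝓕' 𝓖'  hcs'
    rw [Fintype.card_fin] at hbound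
    have hinjG : Set.InjOn f (𝓖 : Set (Finset ℕ)) := by
      intro S hS T hT hST
      exact Subset.antisymm
        (hmono S T ((mem_powerset.1 (hG hS))) (hST ▸ subset_rfl))
        (hmono T S ((mem_powerset.1 (hG hT))) (hST ▸ subset_rfl))
    have hcardG' : 𝓖'.card = 𝓖.card := card_image_of_injOn hinjG
    rw [hcard', hcardG', hcard] at hbound
    have hpow : 2 ^ n = 2 ^ (n - 2) * 4 := by
      have h : n - 2 + 2 = n := by omega
      calc 2 ^ n = 2 ^ (n - 2 + 2) := by rw [h]
      _ = 2 ^ (n - 2) * 4 := by rw [pow_add]; norm_num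
    rw [hpow] at hbound
    have h16 : 0 < 16 * 2 ^ (n - 2) := by positivity
    have : 16 * 2 ^ (n - 2) * 𝓖.card ≤ 16 * 2 ^ (n - 2) * 2 ^ (n - 2) := by
      nlinarith
    exact Nat.le_of_mul_le_mul_left this h16
  · -- construction
    classical
    let B : Finset ℕ := ((Finset.Icc 1 n).erase 1).erase 2
    have h1I : 1 ∈ Finset.Icc 1 n := by rw [mem_Icc]; omega
    have h2e : 2 ∈ (Finset.Icc 1 n).erase 1 := by
      rw [mem_erase, mem_Icc]; omega
    have hBcard : B.card = n - 2 := by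
      simp only [B, card_erase_of_mem h2e, card_erase_of_mem h1I, Nat.card_Icc]
      omega
    have h1B : 1 ∉ B := by simp [B]
    have h2B : 2 ∉ B := by simp [B]
    have hBsub : B ⊆ Finset.Icc 1 n := (erase_subset _ _).trans (erase_subset _ _)
    refine ⟨B.powerset.image (insert 1 ·), B.powerset.image (insert 2 ·), ?_, ?_, ?_, ?_, ?_⟩
    · intro S hS
      obtain ⟨T, hT, rfl⟩ := mem_image.1 hS
      rw [mem_powerset] at hT ⊢
      exact insert_subset h1I (hT.trans hBsub)
    · intro S hS
      obtain ⟨T, hT, rfl⟩ := mem_image.1 hS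
      rw [mem_powerset] at hT ⊢
      have h2I : 2 ∈ Finset.Icc 1 n := by rw [mem_Icc]; omega
      exact insert_subset h2I (hT.trans hBsub)
    · intro F hFm G hGm
      obtain ⟨T, hT, rfl⟩ := mem_image.1 hFm
      obtain ⟨T', hT', rfl⟩ := mem_image.1 hGm
      rw [mem_powerset] at hT hT'
      constructor
      · intro hsub
        have : (1 : ℕ) ∈ insert 2 T' := hsub (mem_insert_self 1 T)
        rcases mem_insert.1 this with h | h
        · omega
        · exact h1B (hT' h)
      · intro hsub
        have : (2 : ℕ) ∈ insert 1 T := hsub (mem_insert_self 2 T')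
        rcases mem_insert.1 this with h | h
        · omega
        · exact h2B (hT h)
    · rw [card_image_of_injOn, card_powerset, hBcard]
      intro S hS T hT hST
      rw [mem_coe, mem_powerset] at hS hT
      have hS1 : 1 ∉ S := fun h => h1B (hS h)
      have hT1 : 1 ∉ T := fun h => h1B (hT h)
      simp only at hST
      rw [← erase_insert hS1, ← erase_insert hT1, hST]
    · rw [card_image_of_injOn, card_powerset, hBcard]
      intro S hS T hT hST
      rw [mem_coe, mem_powerset] at hS hT
      have hS1 : 2 ∉ S := fun h => h2B (hS h)
      have hT1 : 2 ∉ T := fun h => h2B (hT h)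
      simp only at hST
      rw [← erase_insert hS1, ← erase_insert hT1, hST]
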